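/- Under Assumption 2, let V̄ > 0, γ := C/(1−ρ), and N₀ := ⌈max{0, (V̄ − γε)/ε}⌉. For any N ≥ N₀, M ≥ 0 and any x ∈ ℝⁿ with V_{N,M}(x) ≤ V̄, if u*(·) is a minimizing input sequence for V_{N,M}(x) with state trajectory x*(·), then there exists an index k ∈ {0, …, N₀} such that V_{N−k,M}(x*(k)) ≤ γ ε. -/

import Mathlib

open Finset Filter
open scoped ENNReal

noncomputable section

open scoped Classical

/-- State/input spaces are Euclidean spaces. -/
abbrev Vec (n : ℕ) := EuclideanSpace ℝ (Fin n)

/-- Open-loop state trajectory: `x(0) = x`, `x(k+1) = f(x(k), u(k))`. -/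
def traj {n m : ℕ} (f : Vec n → Vec m → Vec n) (x : Vec n) (u : ℕ → Vec m) : ℕ → Vec n
  | 0 => x
  | k + 1 => f (traj f x u k) (u k)

/-- Closed-loop state trajectory under the feedback `κ` (the map `φ_x(·, x)`). -/
def phiX {n m : ℕ} (f : Vec n → Vec m → Vec n) (κ : Vec n → Vec m) (x : Vec n) : ℕ → Vec n
  | 0 => x
  | k + 1 => f (phiX f κ x k) (κ (phiX f κ x k))

/-- `ℓ_min(x) := inf_{u ∈ U} ℓ(x, u)`. -/
def lmin {n m : ℕ} (ℓ : Vec n → Vec m → ℝ) (Uset : Set (Vec m)) (x : Vec n) : ℝ :=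
  sInf ((fun u => ℓ x u) '' Uset)

/-- Finite-tail cost `V_{f,M}(x)`: sum of the stage cost along the κ-closed loop if the
constraints are satisfied along the tail, and `+∞` otherwise (for `M = 0` it equals `0`). -/
def Vtail {n m : ℕ} (f : Vec n → Vec m → Vec n) (κ : Vec n → Vec m)
    (ℓ : Vec n → Vec m → ℝ) (Z : Set (Vec n × Vec m)) (M : ℕ) (x : Vec n) : ℝ≥0∞ :=
  if ∀ k < M, (phiX f κ x k, κ (phiX f κ x k)) ∈ Z then
    ENNReal.ofReal (∑ k ∈ Finset.range M, ℓ (phiX f κ x k) (κ (phiX f κ x k)))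
  else ⊤

/-- Feasibility of the input sequence `u` over horizon `N` from state `x`. -/
def Feasible {n m : ℕ} (f : Vec n → Vec m → Vec n) (Z : Set (Vec n × Vec m))
    (Uset : Set (Vec m)) (N : ℕ) (x : Vec n) (u : ℕ → Vec m) : Prop :=
  ∀ k < N, u k ∈ Uset ∧ (traj f x u k, u k) ∈ Z

/-- MPC open-loop cost `J_{N,M}` of the input sequence `u` from state `x`. -/
def Jcost {n m : ℕ} (f : Vec n → Vec m → Vec n) (κ : Vec n → Vec m)
    (ℓ : Vec n → Vec m → ℝ) (Z : Set (Vec n × Vec m)) (N M : ℕ) (x : Vec n)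
    (u : ℕ → Vec m) : ℝ≥0∞ :=
  ENNReal.ofReal (∑ k ∈ Finset.range N, ℓ (traj f x u k) (u k)) +
    Vtail f κ ℓ Z M (traj f x u N)

/-- MPC value function `V_{N,M}(x)` (equal to `+∞` if the problem is infeasible). -/
def Vmpc {n m : ℕ} (f : Vec n → Vec m → Vec n) (κ : Vec n → Vec m)
    (ℓ : Vec n → Vec m → ℝ) (Z : Set (Vec n × Vec m)) (Uset : Set (Vec m))
    (N M : ℕ) (x : Vec n) : ℝ≥0∞ :=
  ⨅ (u : ℕ → Vec m) (_ : Feasible f Z Uset N x u), Jcost f κ ℓ Z N M x u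

/-- `u` is a minimizing (optimal) input sequence for `V_{N,M}(x)`. -/
def IsMinimizer {n m : ℕ} (f : Vec n → Vec m → Vec n) (κ : Vec n → Vec m)
    (ℓ : Vec n → Vec m → ℝ) (Z : Set (Vec n × Vec m)) (Uset : Set (Vec m))
    (N M : ℕ) (x : Vec n) (u : ℕ → Vec m) : Prop :=
  Feasible f Z Uset N x u ∧ Vmpc f κ ℓ Z Uset N M x = Jcost f κ ℓ Z N M x u

/-- Infinite-horizon optimal cost `V_{∞,0}(x)`. -/
def Vinf {n m : ℕ} (f : Vec n → Vec m → Vec n) (ℓ : Vec n → Vec m → ℝ)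
    (Z : Set (Vec n × Vec m)) (Uset : Set (Vec m)) (x : Vec n) : ℝ≥0∞ :=
  ⨅ (u : ℕ → Vec m) (_ : ∀ k, u k ∈ Uset ∧ (traj f x u k, u k) ∈ Z),
    ∑' k : ℕ, ENNReal.ofReal (ℓ (traj f x u k) (u k))

/-- Assumption 2 (locally stabilizing controller): exponential decay of the stage
cost along the κ-closed loop and constraint satisfaction, locally (`ℓ_min(x) ≤ ε`). -/
def Assumption2 {n m : ℕ} (f : Vec n → Vec m → Vec n) (κ : Vec n → Vec m)
    (ℓ : Vec n → Vec m → ℝ) (Z : Set (Vec n × Vec m)) (Uset : Set (Vec m))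
    (ρ C ε : ℝ) : Prop :=
  ρ ∈ Set.Ico (0 : ℝ) 1 ∧ 1 ≤ C ∧ 0 < ε ∧
    ∀ x : Vec n, lmin ℓ Uset x ≤ ε → ∀ k : ℕ,
      ℓ (phiX f κ x k) (κ (phiX f κ x k)) ≤ C * ρ ^ k * lmin ℓ Uset x ∧
      (phiX f κ x k, κ (phiX f κ x k)) ∈ Z

/-- A class-`K∞` function: continuous, strictly increasing and unbounded on `[0,∞)`
with `α(0) = 0`. -/
def IsKInfty (α : ℝ → ℝ) : Prop :=
  ContinuousOn α (Set.Ici 0) ∧ StrictMonoOn α (Set.Ici 0) ∧ α 0 = 0 ∧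
    Tendsto α atTop atTop


lemma traj_shift {n m : ℕ} (f : Vec n → Vec m → Vec n) (x : Vec n) (u : ℕ → Vec m)
    (a : ℕ) : ∀ b, traj f (traj f x u a) (fun j => u (a + j)) b = traj f x u (a + b) := by
  intro b; induction b with
  | zero => rfl
  | succ b ih => simp [traj, ih]

lemma phiX_add {n m : ℕ} (f : Vec n → Vec m → Vec n) (κ : Vec n → Vec m) (x : Vec n)
    (a : ℕ) : ∀ b, phiX f κ (phiX f κ x a) b = phiX f κ x (a + b) := by
  intro b; induction b with
  | zero => rfl
  | succ b ih => simp [phiX, ih]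

lemma traj_kappa {n m : ℕ} (f : Vec n → Vec m → Vec n) (κ : Vec n → Vec m) (y : Vec n) :
    ∀ k, traj f y (fun j => κ (phiX f κ y j)) k = phiX f κ y k := by
  intro k; induction k with
  | zero => rfl
  | succ k ih => simp [traj, phiX, ih]

lemma lmin_nonneg' {n m : ℕ} (ℓ : Vec n → Vec m → ℝ) (Uset : Set (Vec m))
    (hℓ0 : ∀ x u, 0 ≤ ℓ x u) (x : Vec n) : 0 ≤ lmin ℓ Uset x :=
  Real.sInf_nonneg (by rintro v ⟨w, _, rfl⟩; exact hℓ0 x w)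

lemma lmin_le' {n m : ℕ} (ℓ : Vec n → Vec m → ℝ) (Uset : Set (Vec m))
    (hℓ0 : ∀ x u, 0 ≤ ℓ x u) (x : Vec n) {w : Vec m} (hw : w ∈ Uset) :
    lmin ℓ Uset x ≤ ℓ x w :=
  csInf_le ⟨0, by rintro v ⟨w', _, rfl⟩; exact hℓ0 x w'⟩ ⟨w, hw, rfl⟩

lemma geom_sum_le_one_div' {ρ : ℝ} (h0 : 0 ≤ ρ) (h1 : ρ < 1) (K : ℕ) :
    ∑ k ∈ Finset.range K, ρ ^ k ≤ 1 / (1 - ρ) := by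
  have hρ : ρ ≠ 1 := ne_of_lt h1
  rw [geom_sum_eq hρ]
  have h2 : (ρ ^ K - 1) / (ρ - 1) = (1 - ρ ^ K) / (1 - ρ) := by
    rw [← neg_div_neg_eq]; ring_nf
  rw [h2, div_le_div_iff₀ (by linarith) (by linarith)]
  nlinarith [pow_nonneg h0 K]

/-- Claim A: if `ℓ_min(y) ≤ ε`, then `V_{N',M}(y) ≤ γ ε` (use the local controller). -/
lemma vmpc_le_of_lmin_le {n m : ℕ}
    (f : Vec n → Vec m → Vec n) (κ : Vec n → Vec m) (ℓ : Vec n → Vec m → ℝ)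
    (Z : Set (Vec n × Vec m)) (Uset : Set (Vec m)) (ρ C ε : ℝ)
    (hℓ0 : ∀ x u, 0 ≤ ℓ x u) (hκU : ∀ x, κ x ∈ Uset)
    (hA2 : Assumption2 f κ ℓ Z Uset ρ C ε)
    (γ : ℝ) (hγ : γ = C / (1 - ρ)) (N' M : ℕ) (y : Vec n)
    (hy : lmin ℓ Uset y ≤ ε) :
    Vmpc f κ ℓ Z Uset N' M y ≤ ENNReal.ofReal (γ * ε) := by
  obtain ⟨⟨hρ0, hρ1⟩, hC, hε, hdecay⟩ := hA2
  set u' : ℕ → Vec m := fun j => κ (phiX f κ y j) with hu'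
  have htr : ∀ k, traj f y u' k = phiX f κ y k := traj_kappa f κ y
  have hfeas : Feasible f Z Uset N' y u' := by
    intro k _
    refine ⟨hκU _, ?_⟩
    rw [htr k]
    exact (hdecay y hy k).2
  have hL0 : 0 ≤ lmin ℓ Uset y := lmin_nonneg' ℓ Uset hℓ0 y
  have hbound : ∀ K : ℕ,
      ∑ k ∈ Finset.range K, ℓ (phiX f κ y k) (κ (phiX f κ y k)) ≤ γ * ε := by
    intro K
    have h1 : ∑ k ∈ Finset.range K, ℓ (phiX f κ y k) (κ (phiX f κ y k)) ≤
        ∑ k ∈ Finset.range K, C * ρ ^ k * lmin ℓ Uset y :=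
      Finset.sum_le_sum fun k _ => (hdecay y hy k).1
    have h2 : ∑ k ∈ Finset.range K, C * ρ ^ k * lmin ℓ Uset y =
        (C * lmin ℓ Uset y) * ∑ k ∈ Finset.range K, ρ ^ k := by
      rw [Finset.mul_sum]; exact Finset.sum_congr rfl fun k _ => by ring
    have h3 : (C * lmin ℓ Uset y) * ∑ k ∈ Finset.range K, ρ ^ k ≤
        (C * lmin ℓ Uset y) * (1 / (1 - ρ)) :=
      mul_le_mul_of_nonneg_left (geom_sum_le_one_div' hρ0 hρ1 K)
        (mul_nonneg (by linarith) hL0)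
    have h4 : (C * lmin ℓ Uset y) * (1 / (1 - ρ)) = γ * lmin ℓ Uset y := by
      rw [hγ]; ring
    have hγ0 : 0 ≤ γ := by
      rw [hγ]; exact div_nonneg (by linarith) (by linarith)
    have h5 : γ * lmin ℓ Uset y ≤ γ * ε := mul_le_mul_of_nonneg_left hy hγ0
    linarith
  have harg : ∀ j, phiX f κ (phiX f κ y N') j = phiX f κ y (N' + j) := phiX_add f κ y N'
  have hVt : Vtail f κ ℓ Z M (traj f y u' N') =
      ENNReal.ofReal (∑ j ∈ Finset.range M,
        ℓ (phiX f κ y (N' + j)) (κ (phiX f κ y (N' + j)))) := by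
    rw [htr N']
    unfold Vtail
    rw [if_pos]
    · congr 1
      exact Finset.sum_congr rfl fun j _ => by rw [harg j]
    · intro j _
      rw [harg j]
      exact (hdecay y hy (N' + j)).2
  have hJ : Jcost f κ ℓ Z N' M y u' =
      ENNReal.ofReal (∑ k ∈ Finset.range (N' + M),
        ℓ (phiX f κ y k) (κ (phiX f κ y k))) := by
    unfold Jcost
    rw [hVt, Finset.sum_range_add, ENNReal.ofReal_add
      (Finset.sum_nonneg fun k _ => hℓ0 _ _) (Finset.sum_nonneg fun k _ => hℓ0 _ _)]
    congr 1
    congr 1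
    exact Finset.sum_congr rfl fun k _ => by rw [htr k]
  calc Vmpc f κ ℓ Z Uset N' M y ≤ Jcost f κ ℓ Z N' M y u' := by
        unfold Vmpc; exact iInf₂_le u' hfeas
    _ = _ := hJ
    _ ≤ ENNReal.ofReal (γ * ε) := ENNReal.ofReal_le_ofReal (hbound _)

/-- Theorem 1, Part II, first step: under Assumption 2, with
`γ = C/(1-ρ)` and `N₀ = ⌈max {0, (V̄ - γε)/ε}⌉`, for `N ≥ N₀` and any `x` with
`V_{N,M}(x) ≤ V̄`, along any minimizing sequence there is `k ∈ {0,…,N₀}` with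
`V_{N-k,M}(x*(k)) ≤ γ ε`. -/
theorem reach_small_value_sublevel {n m : ℕ}
    (f : Vec n → Vec m → Vec n) (κ : Vec n → Vec m) (ℓ : Vec n → Vec m → ℝ)
    (Z : Set (Vec n × Vec m)) (Uset : Set (Vec m)) (ρ C ε : ℝ)
    (hf : Continuous fun p : Vec n × Vec m => f p.1 p.2)
    (hℓ : Continuous fun p : Vec n × Vec m => ℓ p.1 p.2) (hℓ0 : ∀ x u, 0 ≤ ℓ x u)
    (hU : IsCompact Uset) (hκ : Continuous κ) (hκU : ∀ x, κ x ∈ Uset)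
    (hA2 : Assumption2 f κ ℓ Z Uset ρ C ε)
    (Vbar γ : ℝ) (hVbar : 0 < Vbar) (hγ : γ = C / (1 - ρ))
    (N₀ : ℕ) (hN₀ : N₀ = ⌈max 0 ((Vbar - γ * ε) / ε)⌉₊)
    (N M : ℕ) (hN : N₀ ≤ N) (x : Vec n)
    (hx : Vmpc f κ ℓ Z Uset N M x ≤ ENNReal.ofReal Vbar)
    (u : ℕ → Vec m) (hu : IsMinimizer f κ ℓ Z Uset N M x u) :
    ∃ k ≤ N₀, Vmpc f κ ℓ Z Uset (N - k) M (traj f x u k) ≤ ENNReal.ofReal (γ * ε) := by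
  obtain ⟨⟨hρ0, hρ1⟩, hC, hε, hdecay⟩ := hA2
  have hγ0 : 0 ≤ γ := by rw [hγ]; exact div_nonneg (by linarith) (by linarith)
  by_cases hcase : ∃ k ≤ N₀, lmin ℓ Uset (traj f x u k) ≤ ε
  · obtain ⟨k, hk, hl⟩ := hcase
    exact ⟨k, hk, vmpc_le_of_lmin_le f κ ℓ Z Uset ρ C ε hℓ0 hκU
      ⟨⟨hρ0, hρ1⟩, hC, hε, hdecay⟩ γ hγ (N - k) M _ hl⟩
  · push_neg at hcase
    refine ⟨N₀, le_rfl, ?_⟩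
    have hfeas := hu.1
    set S : ℝ := ∑ k ∈ Finset.range N₀, ℓ (traj f x u k) (u k) with hS
    have hS0 : 0 ≤ S := Finset.sum_nonneg fun k _ => hℓ0 _ _
    have hterm : ∀ k ∈ Finset.range N₀, ε ≤ ℓ (traj f x u k) (u k) := by
      intro k hk
      have hkN₀ : k < N₀ := Finset.mem_range.mp hk
      have huk := (hfeas k (lt_of_lt_of_le hkN₀ hN)).1
      exact le_trans (le_of_lt (hcase k hkN₀.le))
        (lmin_le' ℓ Uset hℓ0 (traj f x u k) huk)
    have hSge : (N₀ : ℝ) * ε ≤ S := by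
      have := Finset.sum_le_sum hterm
      simpa [mul_comm] using this
    have hN0ε : Vbar - γ * ε ≤ (N₀ : ℝ) * ε := by
      have h1 : (Vbar - γ * ε) / ε ≤ (N₀ : ℝ) :=
        le_trans (le_max_right 0 _) (by rw [hN₀]; exact Nat.le_ceil _)
      rw [div_le_iff₀ hε] at h1
      linarith
    have hVbarle : Vbar ≤ S + γ * ε := by linarith
    have htail : traj f x u N = traj f (traj f x u N₀) (fun j => u (N₀ + j)) (N - N₀) := by
      have hNN : N₀ + (N - N₀) = N := Nat.add_sub_cancel' hN
      rw [traj_shift, hNN]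
    have hsplit : Jcost f κ ℓ Z N M x u = ENNReal.ofReal S +
        Jcost f κ ℓ Z (N - N₀) M (traj f x u N₀) (fun j => u (N₀ + j)) := by
      unfold Jcost
      have hNeq : N = N₀ + (N - N₀) := by omega
      have hsum : ∑ k ∈ Finset.range N, ℓ (traj f x u k) (u k) = S +
          ∑ j ∈ Finset.range (N - N₀),
            ℓ (traj f (traj f x u N₀) (fun j => u (N₀ + j)) j) (u (N₀ + j)) := by
        conv_lhs => rw [hNeq]
        rw [Finset.sum_range_add]
        congr 1
        exact Finset.sum_congr rfl fun j _ => by rw [traj_shift]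
      rw [hsum, ENNReal.ofReal_add hS0 (Finset.sum_nonneg fun k _ => hℓ0 _ _),
        add_assoc, htail]
    have hfeas' : Feasible f Z Uset (N - N₀) (traj f x u N₀) (fun j => u (N₀ + j)) := by
      intro k hk
      have h := hfeas (N₀ + k) (by omega)
      refine ⟨h.1, ?_⟩
      rw [traj_shift]
      exact h.2
    have hVle : Vmpc f κ ℓ Z Uset (N - N₀) M (traj f x u N₀) ≤
        Jcost f κ ℓ Z (N - N₀) M (traj f x u N₀) (fun j => u (N₀ + j)) := by
      unfold Vmpc; exact iInf₂_le _ hfeas'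
    have hchain : ENNReal.ofReal S + Vmpc f κ ℓ Z Uset (N - N₀) M (traj f x u N₀) ≤
        ENNReal.ofReal S + ENNReal.ofReal (γ * ε) := by
      calc ENNReal.ofReal S + Vmpc f κ ℓ Z Uset (N - N₀) M (traj f x u N₀) ≤
          ENNReal.ofReal S +
            Jcost f κ ℓ Z (N - N₀) M (traj f x u N₀) (fun j => u (N₀ + j)) :=
            add_le_add_right hVle _
        _ = Jcost f κ ℓ Z N M x u := hsplit.symm
        _ = Vmpc f κ ℓ Z Uset N M x := hu.2.symm
        _ ≤ ENNReal.ofReal Vbar := hx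
        _ ≤ ENNReal.ofReal (S + γ * ε) := ENNReal.ofReal_le_ofReal hVbarle
        _ = ENNReal.ofReal S + ENNReal.ofReal (γ * ε) :=
            ENNReal.ofReal_add hS0 (mul_nonneg hγ0 hε.le)
    exact (ENNReal.add_le_add_iff_left ENNReal.ofReal_ne_top).mp hchain
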